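/- arXiv:2012.10406 — 2 statements merged into one kernel-verified Lean document; each statement's English description precedes it below -/
import Mathlib

section
/- Let (b, B, m, μ) be an admissible parameter set and assume K is regular. For u ∈ K let ψ(·,u) be the unique K-valued C¹-solution of ∂ψ/∂t = R(ψ), ψ(0,u) = u. Then for all M, T ≥ 0 there exists a constant C(M,T) ≥ 0 such that for all u, v ∈ K with ‖u‖ ≤ M and ‖v‖ ≤ M and all t ∈ [0,T], one has ‖ψ(t,u) − ψ(t,v)‖ ≤ C(M,T) ‖u − v‖. -/
open MeasureTheory Filter
open scoped RealInnerProductSpace Topology ENNReal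

noncomputable section

def IsSelfDualCone {H : Type*} [NormedAddCommGroup H] [InnerProductSpace ℝ H]
    (K : Set H) : Prop :=
  K = {x : H | ∀ y ∈ K, 0 ≤ ⟪x, y⟫}

def trunc {H : Type*} [NormedAddCommGroup H] [InnerProductSpace ℝ H] (ξ : H) : H :=
  if ‖ξ‖ ≤ 1 then ξ else 0

structure AdmissibleParams (H : Type*) [NormedAddCommGroup H] [InnerProductSpace ℝ H]
    [CompleteSpace H] [MeasurableSpace H] [BorelSpace H] (K : Set H) where
  b : H
  B : H →L[ℝ] H
  m : Measure H
  ν : H → Measure H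
  muVec : Set H → H
  m_support : m ((K \ {0})ᶜ) = 0
  m_sq : IntegrableOn (fun ξ : H => ‖ξ‖ ^ 2) (K \ {0}) m
  m_chi : ∀ h : H, IntegrableOn (fun ξ : H => |⟪trunc ξ, h⟫|) (K \ {0}) m
  m_Im : ∃ Im : H, ∀ h : H, ⟪Im, h⟫ = ∫ ξ in K \ {0}, ⟪trunc ξ, h⟫ ∂m
  b_drift : ∀ v ∈ K, 0 ≤ ⟪b, v⟫ - ∫ ξ in K \ {0}, ⟪trunc ξ, v⟫ ∂m
  ν_finite : ∀ x ∈ K, IsFiniteMeasure (ν x)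
  ν_support : ∀ x ∈ K, ν x ((K \ {0})ᶜ) = 0
  ν_add : ∀ x ∈ K, ∀ y ∈ K, ν (x + y) = ν x + ν y
  ν_smul : ∀ x ∈ K, ∀ c : ℝ, 0 ≤ c → ν (c • x) = ENNReal.ofReal c • ν x
  ν_int : ∀ u ∈ K, ∀ x ∈ K, ⟪u, x⟫ = 0 →
    IntegrableOn (fun ξ : H => ⟪trunc ξ, u⟫ / ‖ξ‖ ^ 2) (K \ {0}) (ν x)
  B_quasi : ∀ u ∈ K, ∀ x ∈ K, ⟪u, x⟫ = 0 →
    0 ≤ ⟪ContinuousLinearMap.adjoint B u, x⟫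
      - ∫ ξ in K \ {0}, ⟪trunc ξ, u⟫ / ‖ξ‖ ^ 2 ∂(ν x)
  muVec_mem : ∀ S : Set H, MeasurableSet S → muVec S ∈ K
  muVec_spec : ∀ S : Set H, MeasurableSet S → ∀ x ∈ K, ⟪muVec S, x⟫ = (ν x S).toReal

def IsRegularCone {H : Type*} [NormedAddCommGroup H] [InnerProductSpace ℝ H]
    (K : Set H) : Prop :=
  ∀ (y : H) (x : ℕ → H), y ∈ K → (∀ n, x n ∈ K) →
    (∀ n, x (n + 1) - x n ∈ K) → (∀ n, y - x n ∈ K) →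
    ∃ l : H, Filter.Tendsto x Filter.atTop (nhds l)

/-! ### Auxiliary lemmas -/

lemma exp_aux {a c : ℝ} (ha : 0 ≤ a) (hac : a ≤ c) :
    0 ≤ Real.exp (-a) - Real.exp (-c) ∧ Real.exp (-a) - Real.exp (-c) ≤ c - a ∧
    0 ≤ (c - a) - (Real.exp (-a) - Real.exp (-c)) ∧
    (c - a) - (Real.exp (-a) - Real.exp (-c)) ≤ (c - a) * c := by
  have h1 : Real.exp (-a) * Real.exp (-(c-a)) = Real.exp (-c) := by
    rw [← Real.exp_add]; ring_nf
  have h1' : Real.exp (-c) * Real.exp (c-a) = Real.exp (-a) := by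
    rw [← Real.exp_add]; ring_nf
  have h2 := Real.add_one_le_exp (-(c-a))
  have h2' := Real.add_one_le_exp (c-a)
  have h3 := Real.add_one_le_exp (-c)
  have h4 : Real.exp (-a) ≤ 1 := by
    rw [← Real.exp_zero]; exact Real.exp_le_exp.2 (by linarith)
  have h5 : Real.exp (-c) ≤ 1 := by
    rw [← Real.exp_zero]; exact Real.exp_le_exp.2 (by linarith)
  have h6 := Real.exp_pos (-c)
  have h7 := Real.exp_pos (-a)
  have h8 := Real.exp_pos (-(c-a))
  refine ⟨?_, ?_, ?_, ?_⟩
  · nlinarith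
  · nlinarith
  · nlinarith
  · nlinarith

section ConeLemmas

variable {H : Type*} [NormedAddCommGroup H] [InnerProductSpace ℝ H] [CompleteSpace H]
  {K : Set H}

omit [CompleteSpace H] in
lemma sdc_mem_iff (hK : IsSelfDualCone K) {x : H} : x ∈ K ↔ ∀ y ∈ K, 0 ≤ ⟪x, y⟫ := by
  constructor
  · intro h
    exact (le_of_eq hK) h
  · intro h; rw [hK]; exact h

omit [CompleteSpace H] in
lemma sdc_inner_nonneg (hK : IsSelfDualCone K) {x y : H} (hx : x ∈ K) (hy : y ∈ K) :
    0 ≤ ⟪x, y⟫ := (sdc_mem_iff hK).1 hx y hy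

omit [CompleteSpace H] in
lemma sdc_zero_mem (hK : IsSelfDualCone K) : (0 : H) ∈ K := by
  rw [sdc_mem_iff hK]; intro y hy; simp

omit [CompleteSpace H] in
lemma sdc_add_mem (hK : IsSelfDualCone K) {x y : H} (hx : x ∈ K) (hy : y ∈ K) :
    x + y ∈ K := by
  rw [sdc_mem_iff hK]; intro z hz
  have := sdc_inner_nonneg hK hx hz
  have := sdc_inner_nonneg hK hy hz
  rw [inner_add_left]; linarith

omit [CompleteSpace H] in
lemma sdc_convex (hK : IsSelfDualCone K) : Convex ℝ K := by
  intro x hx y hy a b ha hb _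
  rw [sdc_mem_iff hK]; intro z hz
  have h1 := sdc_inner_nonneg hK hx hz
  have h2 := sdc_inner_nonneg hK hy hz
  rw [inner_add_left, real_inner_smul_left, real_inner_smul_left]
  nlinarith

omit [CompleteSpace H] in
lemma sdc_isClosed (hK : IsSelfDualCone K) : IsClosed K := by
  have : K = ⋂ y ∈ K, {x : H | 0 ≤ ⟪x, y⟫} := by
    ext x
    simp only [Set.mem_iInter, Set.mem_setOf_eq]
    exact sdc_mem_iff hK
  rw [this]
  exact isClosed_biInter fun y _ =>
    isClosed_le continuous_const (continuous_id.inner continuous_const)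

/-- Moreau decomposition for a self-dual cone. -/
lemma sdc_moreau (hK : IsSelfDualCone K) (z : H) :
    ∃ p ∈ K, ∃ q ∈ K, z = p - q ∧ ‖p‖ ≤ ‖z‖ ∧ ‖q‖ ≤ ‖z‖ := by
  obtain ⟨p, hpK, hmin⟩ := exists_norm_eq_iInf_of_complete_convex ⟨0, sdc_zero_mem hK⟩
    ((sdc_isClosed hK).isComplete) (sdc_convex hK) z
  have hproj := (norm_eq_iInf_iff_real_inner_le_zero (sdc_convex hK) hpK).1 hmin
  have hqK : p - z ∈ K := by
    rw [sdc_mem_iff hK]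
    intro y hy
    have h0 := hproj (p + y) (sdc_add_mem hK hpK hy)
    rw [add_sub_cancel_left] at h0
    have h' : ⟪p - z, y⟫ = -⟪z - p, y⟫ := by rw [← inner_neg_left, neg_sub]
    rw [h']; linarith
  have horth : ⟪p, p - z⟫ = 0 := by
    have h1 := hproj 0 (sdc_zero_mem hK)
    rw [zero_sub, inner_neg_right] at h1
    have h2 := sdc_inner_nonneg hK hqK hpK
    rw [real_inner_comm] at h2
    have h' : ⟪p, p - z⟫ = -⟪z - p, p⟫ := by
      rw [real_inner_comm, ← inner_neg_left, neg_sub]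
    rw [h'] at h2 ⊢
    linarith
  have hz : z = p - (p - z) := by abel
  have hnorm : ‖z‖ ^ 2 = ‖p‖ ^ 2 + ‖p - z‖ ^ 2 := by
    have h' : z = p - (p - z) := by abel
    calc ‖z‖ ^ 2 = ‖p - (p - z)‖ ^ 2 := by rw [← h']
    _ = ‖p‖ ^ 2 - 2 * ⟪p, p - z⟫ + ‖p - z‖ ^ 2 := by
        rw [← real_inner_self_eq_norm_sq, ← real_inner_self_eq_norm_sq,
          ← real_inner_self_eq_norm_sq, real_inner_sub_sub_self]
    _ = ‖p‖ ^ 2 + ‖p - z‖ ^ 2 := by rw [horth]; ring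
  refine ⟨p, hpK, p - z, hqK, hz, ?_, ?_⟩
  · nlinarith [norm_nonneg p, norm_nonneg z, norm_nonneg (p - z)]
  · nlinarith [norm_nonneg p, norm_nonneg z, norm_nonneg (p - z)]

end ConeLemmas

section Integrand

variable {H : Type*} [NormedAddCommGroup H] [InnerProductSpace ℝ H]
  [MeasurableSpace H] [BorelSpace H]

/-- The integrand in the definition of `R`. -/
def fInt (x : H) (ξ : H) : ℝ := (Real.exp (-⟪ξ, x⟫) - 1 + ⟪trunc ξ, x⟫) / ‖ξ‖ ^ 2

omit [MeasurableSpace H] [BorelSpace H] in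
lemma trunc_inner (ξ x : H) : ⟪trunc ξ, x⟫ = if ‖ξ‖ ≤ 1 then ⟪ξ, x⟫ else 0 := by
  unfold trunc; split <;> simp

lemma fInt_measurable (x : H) : Measurable (fInt x) := by
  unfold fInt
  apply Measurable.div _ ((continuous_norm.pow 2).measurable)
  apply Measurable.add
  · apply Measurable.sub _ measurable_const
    exact (Real.continuous_exp.comp
      ((continuous_id.inner (continuous_const (y := x))).neg)).measurable
  · have h' : (fun ξ : H => ⟪trunc ξ, x⟫) = fun ξ => if ‖ξ‖ ≤ 1 then ⟪ξ, x⟫ else 0 := by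
      funext ξ; exact trunc_inner ξ x
    rw [h']
    exact Measurable.ite (isClosed_le continuous_norm continuous_const).measurableSet
      (continuous_id.inner continuous_const).measurable measurable_const

omit [MeasurableSpace H] [BorelSpace H] in
lemma fInt_bounds {x ξ : H} (hξ : ξ ≠ 0) (hin : 0 ≤ ⟪ξ, x⟫) :
    -1 ≤ fInt x ξ ∧ fInt x ξ ≤ ‖x‖ ^ 2 + 1 ∧ |fInt x ξ| ≤ ‖x‖ ^ 2 + 1 := by
  have hle : |⟪ξ, x⟫| ≤ ‖ξ‖ * ‖x‖ := abs_real_inner_le_norm ξ x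
  have hn : 0 < ‖ξ‖ := norm_pos_iff.2 hξ
  have hn2 : 0 < ‖ξ‖ ^ 2 := by positivity
  have hx0 : 0 ≤ ‖x‖ := norm_nonneg x
  set s := ⟪ξ, x⟫ with hs
  have hb := exp_aux le_rfl hin
  rw [neg_zero, Real.exp_zero] at hb
  unfold fInt
  rw [trunc_inner, ← hs]
  have key : ∀ num : ℝ, -(‖ξ‖^2) ≤ num → num ≤ (‖x‖^2 + 1) * ‖ξ‖^2 →
      -1 ≤ num / ‖ξ‖^2 ∧ num / ‖ξ‖^2 ≤ ‖x‖^2 + 1 ∧ |num / ‖ξ‖^2| ≤ ‖x‖^2 + 1 := by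
    intro num h1 h2
    have e1 : -1 ≤ num / ‖ξ‖^2 := by rw [le_div_iff₀ hn2]; linarith
    have e2 : num / ‖ξ‖^2 ≤ ‖x‖^2 + 1 := by rw [div_le_iff₀ hn2]; linarith
    exact ⟨e1, e2, abs_le.2 ⟨by nlinarith, e2⟩⟩
  split
  · rename_i hle1
    apply key
    · nlinarith [hb.2.2.1]
    · have hss : s ≤ ‖ξ‖ * ‖x‖ := le_trans (le_abs_self s) hle
      nlinarith [hb.2.2.2, hb.2.2.1]
  · rename_i hgt
    have h1 : Real.exp (-s) ≤ 1 := by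
      rw [← Real.exp_zero]; exact Real.exp_le_exp.2 (by linarith)
    have h0 : 0 < Real.exp (-s) := Real.exp_pos _
    apply key
    · nlinarith
    · nlinarith

omit [MeasurableSpace H] [BorelSpace H] in
lemma fInt_diff_bound {x y ξ : H} (hξ : ξ ≠ 0) (hinx : 0 ≤ ⟪ξ, x⟫) (hiny : 0 ≤ ⟪ξ, y⟫)
    {ρ : ℝ} (hx : ‖x‖ ≤ ρ) (hy : ‖y‖ ≤ ρ) :
    |fInt x ξ - fInt y ξ| ≤ (ρ + 1) * ‖x - y‖ := by
  have hn : 0 < ‖ξ‖ := norm_pos_iff.2 hξ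
  have hn2 : 0 < ‖ξ‖ ^ 2 := by positivity
  have hρ : 0 ≤ ρ := le_trans (norm_nonneg x) hx
  have hdxy : 0 ≤ ‖x - y‖ := norm_nonneg _
  set a := ⟪ξ, x⟫ with ha
  set c := ⟪ξ, y⟫ with hc
  have hac : |a - c| ≤ ‖ξ‖ * ‖x - y‖ := by
    rw [ha, hc, ← inner_sub_right]
    exact abs_real_inner_le_norm ξ (x - y)
  have hax : a ≤ ‖ξ‖ * ρ := by
    calc a ≤ |a| := le_abs_self a
    _ ≤ ‖ξ‖ * ‖x‖ := abs_real_inner_le_norm ξ x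
    _ ≤ ‖ξ‖ * ρ := by nlinarith
  have hcy : c ≤ ‖ξ‖ * ρ := by
    calc c ≤ |c| := le_abs_self c
    _ ≤ ‖ξ‖ * ‖y‖ := abs_real_inner_le_norm ξ y
    _ ≤ ‖ξ‖ * ρ := by nlinarith
  unfold fInt
  rw [trunc_inner, trunc_inner, ← ha, ← hc, div_sub_div_same]
  rw [abs_div, abs_of_pos hn2, div_le_iff₀ hn2]
  split
  · rename_i h1
    have goal : |Real.exp (-a) - 1 + a - (Real.exp (-c) - 1 + c)| ≤ (ρ+1) * ‖x-y‖ * ‖ξ‖^2 := by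
      rcases le_total a c with h | h
      · have hb := exp_aux hinx h
        rw [abs_sub_comm, abs_of_nonneg (by linarith [hb.2.1] :
          (0:ℝ) ≤ (Real.exp (-c) - 1 + c) - (Real.exp (-a) - 1 + a))]
        have h2 : (c - a) - (Real.exp (-a) - Real.exp (-c)) ≤ (c - a) * c := hb.2.2.2
        have h3 : c - a ≤ ‖ξ‖ * ‖x - y‖ := by
          have := abs_sub_comm a c ▸ hac
          linarith [le_abs_self (c - a), (abs_le.1 this).2]
        nlinarith [hb.2.2.1]
      · have hb := exp_aux hiny h
        rw [abs_of_nonneg (by linarith [hb.2.1] :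
          (0:ℝ) ≤ (Real.exp (-a) - 1 + a) - (Real.exp (-c) - 1 + c))]
        have h2 : (a - c) - (Real.exp (-c) - Real.exp (-a)) ≤ (a - c) * a := hb.2.2.2
        have h3 : a - c ≤ ‖ξ‖ * ‖x - y‖ := by
          linarith [le_abs_self (a - c), (abs_le.1 hac).2]
        nlinarith [hb.2.2.1]
    convert goal using 2
  · rename_i h1
    push_neg at h1
    have goal : |Real.exp (-a) - Real.exp (-c)| ≤ ‖ξ‖ * ‖x - y‖ := by
      rcases le_total a c with h | h
      · have hb := exp_aux hinx h
        rw [abs_of_nonneg hb.1]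
        linarith [hb.2.1, le_abs_self (a-c), (abs_le.1 hac).1, (abs_le.1 hac).2,
          neg_le.1 (abs_le.1 hac).1]
      · have hb := exp_aux hiny h
        rw [abs_sub_comm, abs_of_nonneg hb.1]
        linarith [hb.2.1, (abs_le.1 hac).2, le_abs_self (a - c)]
    have h2a : ‖ξ‖ * 1 ≤ ‖ξ‖ * ‖ξ‖ := mul_le_mul_of_nonneg_left h1.le hn.le
    have h2 : ‖ξ‖ ≤ (ρ+1) * ‖ξ‖^2 := by nlinarith
    have goal2 : ‖ξ‖ * ‖x - y‖ ≤ (ρ+1) * ‖x-y‖ * ‖ξ‖^2 := by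
      calc ‖ξ‖ * ‖x - y‖ ≤ ((ρ+1) * ‖ξ‖^2) * ‖x - y‖ := mul_le_mul_of_nonneg_right h2 hdxy
        _ = (ρ+1) * ‖x-y‖ * ‖ξ‖^2 := by ring
    have heq : Real.exp (-a) - 1 + 0 - (Real.exp (-c) - 1 + 0)
        = Real.exp (-a) - Real.exp (-c) := by ring
    rw [heq]
    exact le_trans goal goal2

end Integrand

set_option maxHeartbeats 1600000

/-- Local Lipschitz continuity of `ψ(t,·)` in the initial value:
for all `M, T ≥ 0` there is `C(M,T) ≥ 0` with `‖ψ(t,u) − ψ(t,v)‖ ≤ C(M,T)‖u − v‖`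
whenever `‖u‖, ‖v‖ ≤ M` and `t ∈ [0,T]`. -/
theorem stmt_10 {H : Type*} [NormedAddCommGroup H] [InnerProductSpace ℝ H] [CompleteSpace H]
    [MeasurableSpace H] [BorelSpace H] (K : Set H)
    (hK : IsSelfDualCone K) (hKgen : ∀ z : H, ∃ x ∈ K, ∃ y ∈ K, z = x - y)
    (hreg : IsRegularCone K)
    (p : AdmissibleParams H K)
    (R : H → H)
    (hR : ∀ u ∈ K, ∀ x ∈ K, ⟪R u, x⟫ =
      ⟪ContinuousLinearMap.adjoint p.B u, x⟫
        - ∫ ξ in K \ {0}, (Real.exp (-⟪ξ, u⟫) - 1 + ⟪trunc ξ, u⟫) / ‖ξ‖ ^ 2 ∂(p.ν x))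
    (ψ : ℝ → H → H)
    (hψ : ∀ u ∈ K, ψ 0 u = u ∧ (∀ t, 0 ≤ t → ψ t u ∈ K) ∧
      (∀ t, 0 ≤ t → HasDerivWithinAt (fun s => ψ s u) (R (ψ t u)) (Set.Ici 0) t))
    (hψuniq : ∀ u ∈ K, ∀ g : ℝ → H, g 0 = u → (∀ t, 0 ≤ t → g t ∈ K) →
      (∀ t, 0 ≤ t → HasDerivWithinAt g (R (g t)) (Set.Ici 0) t) →
      ∀ t, 0 ≤ t → g t = ψ t u) :
    ∀ M T : ℝ, 0 ≤ M → 0 ≤ T → ∃ C : ℝ, 0 ≤ C ∧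
      ∀ u ∈ K, ∀ v ∈ K, ‖u‖ ≤ M → ‖v‖ ≤ M → ∀ t ∈ Set.Icc (0 : ℝ) T,
        ‖ψ t u - ψ t v‖ ≤ C * ‖u - v‖ := by
  intro M T hM hT
  have hSm : MeasurableSet (K \ {0}) :=
    ((sdc_isClosed hK).measurableSet).diff (measurableSet_singleton 0)
  have hne0 : ∀ ξ ∈ K \ {0}, ξ ≠ 0 := fun ξ hξ h => hξ.2 (by simp [h])
  -- constants
  set nB : ℝ := ‖ContinuousLinearMap.adjoint p.B‖ with hnBdef
  set nμ : ℝ := ‖p.muVec (K \ {0})‖ with hnμdef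
  have hnB0 : 0 ≤ nB := norm_nonneg _
  have hnμ0 : 0 ≤ nμ := norm_nonneg _
  set K₀ : ℝ := 2 * nB + nμ with hK₀def
  have hK₀0 : 0 ≤ K₀ := by rw [hK₀def]; linarith
  set ρsq : ℝ := gronwallBound (M^2) K₀ nμ T with hρsqdef
  set ρ : ℝ := Real.sqrt ρsq with hρdef
  have hρ0 : 0 ≤ ρ := Real.sqrt_nonneg _
  set Λ : ℝ := nB + (ρ + 1) * nμ with hΛdef
  have hΛ0 : 0 ≤ Λ := by rw [hΛdef]; nlinarith
  set L : ℝ := 2 * Λ with hLdef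
  have hL0 : 0 ≤ L := by rw [hLdef]; linarith
  -- mass bound
  have hmass : ∀ q ∈ K, ((p.ν q) (K \ {0})).toReal ≤ nμ * ‖q‖ := by
    intro q hq
    have hspec := p.muVec_spec (K \ {0}) hSm q hq
    rw [← hspec, hnμdef]
    exact real_inner_le_norm _ _
  -- integrability of the integrand
  have hInt : ∀ x ∈ K, ∀ q ∈ K, IntegrableOn (fInt x) (K \ {0}) (p.ν q) := by
    intro x hx q hq
    haveI := p.ν_finite q hq
    refine Integrable.mono' (g := fun _ => ‖x‖^2 + 1)
      (integrableOn_const (measure_ne_top _ _))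
      ((fInt_measurable x).aestronglyMeasurable.restrict) ?_
    refine (ae_restrict_iff' hSm).2 (Eventually.of_forall fun ξ hξ => ?_)
    rw [Real.norm_eq_abs]
    exact (fInt_bounds (hne0 ξ hξ) (sdc_inner_nonneg hK hξ.1 hx)).2.2
  -- pairing formula
  have hpair : ∀ x ∈ K, ∀ q ∈ K, ⟪R x, q⟫ =
      ⟪ContinuousLinearMap.adjoint p.B x, q⟫ - ∫ ξ in K \ {0}, fInt x ξ ∂(p.ν q) := by
    intro x hx q hq
    simpa only [fInt] using hR x hx q hq
  -- pairing bound for differences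
  have hRpair : ∀ x ∈ K, ∀ y ∈ K, ‖x‖ ≤ ρ → ‖y‖ ≤ ρ → ∀ q ∈ K,
      |⟪R x - R y, q⟫| ≤ Λ * (‖x - y‖ * ‖q‖) := by
    intro x hx y hy hxρ hyρ q hq
    haveI := p.ν_finite q hq
    have hix := hInt x hx q hq
    have hiy := hInt y hy q hq
    have heq : ⟪R x - R y, q⟫ = ⟪ContinuousLinearMap.adjoint p.B (x - y), q⟫
        - ∫ ξ in K \ {0}, (fInt x ξ - fInt y ξ) ∂(p.ν q) := by
      rw [inner_sub_left, hpair x hx q hq, hpair y hy q hq, map_sub, inner_sub_left,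
        integral_sub hix hiy]
      ring
    rw [heq]
    have hterm1 : |⟪ContinuousLinearMap.adjoint p.B (x - y), q⟫| ≤ nB * ‖x - y‖ * ‖q‖ := by
      calc |⟪ContinuousLinearMap.adjoint p.B (x - y), q⟫|
          ≤ ‖ContinuousLinearMap.adjoint p.B (x - y)‖ * ‖q‖ := abs_real_inner_le_norm _ _
        _ ≤ nB * ‖x - y‖ * ‖q‖ := mul_le_mul_of_nonneg_right
            ((ContinuousLinearMap.adjoint p.B).le_opNorm _) (norm_nonneg q)
    have hterm2 : |∫ ξ in K \ {0}, (fInt x ξ - fInt y ξ) ∂(p.ν q)|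
        ≤ ((ρ + 1) * ‖x - y‖) * ((p.ν q) (K \ {0})).toReal := by
      rw [← Real.norm_eq_abs]
      refine norm_setIntegral_le_of_norm_le_const (measure_lt_top _ _) (fun ξ hξ => ?_)
      rw [Real.norm_eq_abs]
      exact fInt_diff_bound (hne0 ξ hξ) (sdc_inner_nonneg hK hξ.1 hx)
        (sdc_inner_nonneg hK hξ.1 hy) hxρ hyρ
    have habs : |⟪ContinuousLinearMap.adjoint p.B (x - y), q⟫
        - ∫ ξ in K \ {0}, (fInt x ξ - fInt y ξ) ∂(p.ν q)|
        ≤ |⟪ContinuousLinearMap.adjoint p.B (x - y), q⟫|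
          + |∫ ξ in K \ {0}, (fInt x ξ - fInt y ξ) ∂(p.ν q)| := abs_sub _ _
    have hm := hmass q hq
    have h1 : 0 ≤ (ρ + 1) * ‖x - y‖ := by positivity
    have h2 : ((ρ + 1) * ‖x - y‖) * ((p.ν q) (K \ {0})).toReal
        ≤ ((ρ + 1) * ‖x - y‖) * (nμ * ‖q‖) := mul_le_mul_of_nonneg_left hm h1
    rw [hΛdef]
    nlinarith [hterm1, hterm2, habs]
  -- Lipschitz bound for R on the ball of radius ρ in K
  have hRlip : ∀ x ∈ K, ∀ y ∈ K, ‖x‖ ≤ ρ → ‖y‖ ≤ ρ → ‖R x - R y‖ ≤ L * ‖x - y‖ := by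
    intro x hx y hy hxρ hyρ
    obtain ⟨pz, hpz, qz, hqz, hzeq, hpzn, hqzn⟩ := sdc_moreau hK (R x - R y)
    have h1 := hRpair x hx y hy hxρ hyρ pz hpz
    have h2 := hRpair x hx y hy hxρ hyρ qz hqz
    have hz2 : ‖R x - R y‖^2 = ⟪R x - R y, pz⟫ - ⟪R x - R y, qz⟫ := by
      calc ‖R x - R y‖^2 = ⟪R x - R y, R x - R y⟫ := (real_inner_self_eq_norm_sq _).symm
        _ = ⟪R x - R y, pz - qz⟫ := by rw [← hzeq]
        _ = ⟪R x - R y, pz⟫ - ⟪R x - R y, qz⟫ := inner_sub_right _ _ _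
    have hn := norm_nonneg (R x - R y)
    have hd := norm_nonneg (x - y)
    have e1 : ⟪R x - R y, pz⟫ ≤ Λ * (‖x - y‖ * ‖pz‖) := le_trans (le_abs_self _) h1
    have e2 : -⟪R x - R y, qz⟫ ≤ Λ * (‖x - y‖ * ‖qz‖) := le_trans (neg_le_abs _) h2
    have hkey : ‖R x - R y‖^2 ≤ L * ‖x - y‖ * ‖R x - R y‖ := by
      rw [hz2, hLdef]
      nlinarith [mul_le_mul_of_nonneg_left hpzn (mul_nonneg hΛ0 hd),
        mul_le_mul_of_nonneg_left hqzn (mul_nonneg hΛ0 hd)]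
    rcases eq_or_lt_of_le hn with h0 | h0
    · rw [← h0]
      nlinarith
    · nlinarith [hkey]
  -- one-sided bound for ⟪R w, w⟫
  have hRself : ∀ w ∈ K, ⟪w, R w⟫ + ⟪R w, w⟫ ≤ K₀ * ⟪w, w⟫ + nμ := by
    intro w hw
    haveI := p.ν_finite w hw
    have hpw := hpair w hw w hw
    have hlow : -(((p.ν w) (K \ {0})).toReal) ≤ ∫ ξ in K \ {0}, fInt w ξ ∂(p.ν w) := by
      have hconst : IntegrableOn (fun _ : H => (-1 : ℝ)) (K \ {0}) (p.ν w) :=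
        integrableOn_const (measure_ne_top _ _)
      have hmono := setIntegral_mono_on hconst (hInt w hw w hw) hSm
        (fun ξ hξ => (fInt_bounds (hne0 ξ hξ) (sdc_inner_nonneg hK hξ.1 hw)).1)
      rw [setIntegral_const] at hmono
      simp at hmono
      exact hmono
    have hB : ⟪ContinuousLinearMap.adjoint p.B w, w⟫ ≤ nB * ‖w‖ * ‖w‖ := by
      calc ⟪ContinuousLinearMap.adjoint p.B w, w⟫
          ≤ ‖ContinuousLinearMap.adjoint p.B w‖ * ‖w‖ := real_inner_le_norm _ _
        _ ≤ nB * ‖w‖ * ‖w‖ := mul_le_mul_of_nonneg_right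
            ((ContinuousLinearMap.adjoint p.B).le_opNorm _) (norm_nonneg w)
    have h1 : ⟪R w, w⟫ ≤ nB * ‖w‖^2 + nμ * ‖w‖ := by
      rw [hpw]
      nlinarith [hmass w hw, hlow, hB]
    have hww : ⟪w, w⟫ = ‖w‖^2 := real_inner_self_eq_norm_sq w
    have h2 : 2*‖w‖ ≤ 1 + ‖w‖^2 := by nlinarith [sq_nonneg (‖w‖ - 1)]
    have hcomm : ⟪w, R w⟫ = ⟪R w, w⟫ := real_inner_comm (R w) w
    have h3 := mul_le_mul_of_nonneg_left h2 hnμ0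
    rw [hww, hK₀def]
    linarith [h1, hcomm, h3]
  -- a priori bound on trajectories
  have hapriori : ∀ u ∈ K, ‖u‖ ≤ M → ∀ t ∈ Set.Icc (0:ℝ) T, ‖ψ t u‖ ≤ ρ := by
    intro u hu hMu
    obtain ⟨h0, hKm, hd⟩ := hψ u hu
    have contu : ContinuousOn (fun s => ψ s u) (Set.Icc 0 T) := fun s hs =>
      ((hd s hs.1).continuousWithinAt).mono (fun r hr => hr.1)
    have contf : ContinuousOn (fun s => ⟪ψ s u, ψ s u⟫) (Set.Icc 0 T) :=
      contu.inner contu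
    have hder : ∀ s ∈ Set.Ico (0:ℝ) T, HasDerivWithinAt (fun r => ⟪ψ r u, ψ r u⟫)
        (⟪ψ s u, R (ψ s u)⟫ + ⟪R (ψ s u), ψ s u⟫) (Set.Ici s) s := by
      intro s hs
      have h := (hd s hs.1).mono (Set.Ici_subset_Ici.2 hs.1)
      exact h.inner ℝ h
    have hgr := le_gronwallBound_of_liminf_deriv_right_le
      (f' := fun s => ⟪ψ s u, R (ψ s u)⟫ + ⟪R (ψ s u), ψ s u⟫) contf
      (fun s hs r hr => (hder s hs).liminf_right_slope_le hr)
      (show ⟪ψ 0 u, ψ 0 u⟫ ≤ M^2 by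
        rw [h0, real_inner_self_eq_norm_sq]
        exact pow_le_pow_left₀ (norm_nonneg u) hMu 2)
      (fun s hs => hRself (ψ s u) (hKm s hs.1))
    intro t ht
    have h1 := hgr t ht
    have hmono : gronwallBound (M^2) K₀ nμ (t - 0) ≤ ρsq := by
      rw [hρsqdef, sub_zero]
      rcases eq_or_ne K₀ 0 with h | h
      · rw [h]
        simp only [gronwallBound_K0]
        nlinarith [ht.1, ht.2]
      · have hK0pos : 0 < K₀ := lt_of_le_of_ne hK₀0 (Ne.symm h)
        simp only [gronwallBound_of_K_ne_0 h]
        have e1 : Real.exp (K₀*t) ≤ Real.exp (K₀*T) :=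
          Real.exp_le_exp.2 (mul_le_mul_of_nonneg_left ht.2 hK0pos.le)
        have e2 : (0:ℝ) < Real.exp (K₀*t) := Real.exp_pos _
        have e3 : 0 ≤ nμ / K₀ := by positivity
        nlinarith [sq_nonneg M]
    have h2 : ‖ψ t u‖^2 ≤ ρsq := by
      rw [← real_inner_self_eq_norm_sq]; linarith
    rw [hρdef]
    calc ‖ψ t u‖ = Real.sqrt (‖ψ t u‖^2) := (Real.sqrt_sq (norm_nonneg _)).symm
      _ ≤ Real.sqrt ρsq := Real.sqrt_le_sqrt h2
  -- final Gronwall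
  refine ⟨Real.exp (L*T), (Real.exp_pos _).le, ?_⟩
  intro u hu v hv hMu hMv t ht
  obtain ⟨h0u, hKu, hdu⟩ := hψ u hu
  obtain ⟨h0v, hKv, hdv⟩ := hψ v hv
  have contu : ContinuousOn (fun s => ψ s u) (Set.Icc 0 T) := fun s hs =>
    ((hdu s hs.1).continuousWithinAt).mono (fun r hr => hr.1)
  have contv : ContinuousOn (fun s => ψ s v) (Set.Icc 0 T) := fun s hs =>
    ((hdv s hs.1).continuousWithinAt).mono (fun r hr => hr.1)
  have hder : ∀ s ∈ Set.Ico (0:ℝ) T, HasDerivWithinAt (fun r => ψ r u - ψ r v)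
      (R (ψ s u) - R (ψ s v)) (Set.Ici s) s := fun s hs =>
    ((hdu s hs.1).mono (Set.Ici_subset_Ici.2 hs.1)).sub
      ((hdv s hs.1).mono (Set.Ici_subset_Ici.2 hs.1))
  have hbound : ∀ s ∈ Set.Ico (0:ℝ) T,
      ‖R (ψ s u) - R (ψ s v)‖ ≤ L * ‖ψ s u - ψ s v‖ + 0 := by
    intro s hs
    rw [add_zero]
    exact hRlip _ (hKu s hs.1) _ (hKv s hs.1)
      (hapriori u hu hMu s ⟨hs.1, hs.2.le⟩) (hapriori v hv hMv s ⟨hs.1, hs.2.le⟩)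
  have hg := norm_le_gronwallBound_of_norm_deriv_right_le (contu.sub contv) hder
    (le_of_eq (by rw [h0u, h0v]) : ‖ψ 0 u - ψ 0 v‖ ≤ ‖u - v‖) hbound t ht
  rw [gronwallBound_ε0, sub_zero] at hg
  simp only [Pi.sub_apply] at hg
  have hexp : Real.exp (L*t) ≤ Real.exp (L*T) :=
    Real.exp_le_exp.2 (mul_le_mul_of_nonneg_left ht.2 hL0)
  nlinarith [norm_nonneg (u - v), Real.exp_pos (L*t), hg]
end
end

section
/- Let (b, B, m, μ) be an admissible parameter set. For u ∈ K define DF(u) : H → ℝ by DF(u)v = ⟨b,v⟩ + ∫ (⟨ξ,v⟩ e^{−⟨ξ,u⟩} − ⟨χ(ξ),v⟩) m(dξ) and D²F(u)(v,w) = −∫ ⟨ξ,v⟩ ⟨ξ,w⟩ e^{−⟨ξ,u⟩} m(dξ) (all integrals being finite). Then for all u, v, w ∈ K the one-sided derivatives of F exist and satisfy D₊F(u)(v) = DF(u)v and D₊²F(u)(v,w) = D²F(u)(v,w). -/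
open MeasureTheory Filter
open scoped RealInnerProductSpace Topology ENNReal

noncomputable section

/-- The function `F` associated with an admissible parameter set. -/
def Ffun {H : Type*} [NormedAddCommGroup H] [InnerProductSpace ℝ H] [CompleteSpace H]
    [MeasurableSpace H] [BorelSpace H] {K : Set H} (p : AdmissibleParams H K) (u : H) : ℝ :=
  ⟪p.b, u⟫ - ∫ ξ in K \ {0}, (Real.exp (-⟪ξ, u⟫) - 1 + ⟪trunc ξ, u⟫) ∂p.m

/-- The first derivative candidate `DF(u)v` of `F`. -/
def DFfun {H : Type*} [NormedAddCommGroup H] [InnerProductSpace ℝ H] [CompleteSpace H]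
    [MeasurableSpace H] [BorelSpace H] {K : Set H} (p : AdmissibleParams H K) (u v : H) : ℝ :=
  ⟪p.b, v⟫ + ∫ ξ in K \ {0}, (⟪ξ, v⟫ * Real.exp (-⟪ξ, u⟫) - ⟪trunc ξ, v⟫) ∂p.m

section Aux

variable {H : Type*} [NormedAddCommGroup H] [InnerProductSpace ℝ H]

lemma trunc_meas [MeasurableSpace H] [BorelSpace H] : Measurable (trunc : H → H) := by
  unfold trunc
  exact Measurable.ite (measurableSet_le measurable_norm measurable_const)
    measurable_id measurable_const

lemma meas_inner_right [MeasurableSpace H] [BorelSpace H] (y : H) :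
    Measurable fun ξ : H => ⟪ξ, y⟫ :=
  (continuous_id.inner continuous_const).measurable

lemma meas_inner_trunc [MeasurableSpace H] [BorelSpace H] (y : H) :
    Measurable fun ξ : H => ⟪trunc ξ, y⟫ :=
  (meas_inner_right y).comp trunc_meas

lemma one_sub_exp_neg_le {x : ℝ} : 1 - Real.exp (-x) ≤ x := by
  have := Real.add_one_le_exp (-x); linarith

lemma exp_neg_le_one {a : ℝ} (ha : 0 ≤ a) : Real.exp (-a) ≤ 1 := by
  have := Real.exp_le_exp.mpr (neg_nonpos.mpr ha); simpa using this

lemma exp_slope_abs_le {a c l : ℝ} (ha : 0 ≤ a) (hc : 0 ≤ c) (hl : 0 < l) :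
    |(Real.exp (-(a + l * c)) - Real.exp (-a)) / l| ≤ c := by
  have h1 : Real.exp (-(a + l * c)) ≤ Real.exp (-a) :=
    Real.exp_le_exp.mpr (by nlinarith)
  have h2 : Real.exp (-a) ≤ 1 := exp_neg_le_one ha
  have h3 : 1 - Real.exp (-(l * c)) ≤ l * c := one_sub_exp_neg_le
  have h4 : Real.exp (-(a + l * c)) = Real.exp (-a) * Real.exp (-(l * c)) := by
    rw [← Real.exp_add]; ring_nf
  have h5 : 0 < Real.exp (-(l * c)) := Real.exp_pos _
  have h6 : Real.exp (-(l * c)) ≤ 1 := exp_neg_le_one (by positivity)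
  rw [abs_div, abs_of_pos hl, div_le_iff₀ hl, abs_of_nonpos (by linarith)]
  have h7 : 0 < Real.exp (-a) := Real.exp_pos _
  nlinarith

lemma bound_key {ξ v : H} (hc : 0 ≤ ⟪ξ, v⟫) :
    ⟪ξ, v⟫ + |⟪trunc ξ, v⟫| ≤ 2 * |⟪trunc ξ, v⟫| + ‖ξ‖ ^ 2 * ‖v‖ := by
  by_cases h : ‖ξ‖ ≤ 1
  · have ht : trunc ξ = ξ := if_pos h
    rw [ht, abs_of_nonneg hc]
    have : (0:ℝ) ≤ ‖ξ‖ ^ 2 * ‖v‖ := by positivity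
    linarith
  · have ht : trunc ξ = 0 := if_neg h
    push_neg at h
    rw [ht]
    simp only [inner_zero_left, abs_zero, mul_zero, add_zero, zero_add]
    have h1 : ⟪ξ, v⟫ ≤ ‖ξ‖ * ‖v‖ := real_inner_le_norm ξ v
    nlinarith [norm_nonneg v, norm_nonneg ξ]

lemma bound_key2 {ξ u : H} (ha : 0 ≤ ⟪ξ, u⟫) :
    |Real.exp (-⟪ξ, u⟫) - 1 + ⟪trunc ξ, u⟫| ≤ 2 * |⟪trunc ξ, u⟫| + ‖ξ‖ ^ 2 := by
  have he1 : Real.exp (-⟪ξ, u⟫) ≤ 1 := exp_neg_le_one ha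
  have hle : 1 - Real.exp (-⟪ξ, u⟫) ≤ ⟪ξ, u⟫ := one_sub_exp_neg_le
  have he0 : 0 < Real.exp (-⟪ξ, u⟫) := Real.exp_pos _
  by_cases h : ‖ξ‖ ≤ 1
  · have ht : trunc ξ = ξ := if_pos h
    rw [ht, abs_of_nonneg ha]
    have h2 : |Real.exp (-⟪ξ, u⟫) - 1 + ⟪ξ, u⟫| ≤ ⟪ξ, u⟫ :=
      abs_le.mpr ⟨by linarith, by linarith⟩
    have : (0:ℝ) ≤ ‖ξ‖ ^ 2 := by positivity
    linarith
  · have ht : trunc ξ = 0 := if_neg h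
    push_neg at h
    rw [ht]
    simp only [inner_zero_left, abs_zero, mul_zero, add_zero, zero_add]
    have h2 : |Real.exp (-⟪ξ, u⟫) - 1| ≤ 1 := abs_le.mpr ⟨by linarith, by linarith⟩
    have h3 : (1:ℝ) ≤ ‖ξ‖ ^ 2 := by nlinarith
    linarith

/-- Pointwise tendsto of the exponential slope. -/
lemma exp_slope_tendsto (a c : ℝ) :
    Tendsto (fun l : ℝ => (Real.exp (-(a + l * c)) - Real.exp (-a)) / l)
      (𝓝[>] 0) (𝓝 (-(c * Real.exp (-a)))) := by
  have h0 : HasDerivAt (fun l : ℝ => -(a + l * c)) (-c) 0 := by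
    exact ((hasDerivAt_mul_const c).const_add a).neg
  have hd : HasDerivAt (fun l : ℝ => Real.exp (-(a + l * c)))
      (Real.exp (-(a + 0 * c)) * -c) 0 := h0.exp
  have hd' : HasDerivAt (fun l : ℝ => Real.exp (-(a + l * c))) (-(c * Real.exp (-a))) 0 := by
    convert hd using 1; ring_nf
  have hs := hasDerivAt_iff_tendsto_slope.mp hd'
  have hs2 : Tendsto (slope (fun l : ℝ => Real.exp (-(a + l * c))) 0)
      (𝓝[>] 0) (𝓝 (-(c * Real.exp (-a)))) :=
    hs.mono_left (nhdsWithin_mono 0 fun l hl => Set.mem_compl_singleton_iff.mpr (ne_of_gt hl))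
  refine hs2.congr fun l => ?_
  rw [slope_def_field]
  simp

end Aux

/-- The one-sided derivatives of `F` exist on `K` and are given by
`D₊F(u)(v) = DF(u)v` and `D₊²F(u)(v,w) = −∫ ⟨ξ,v⟩⟨ξ,w⟩e^{−⟨ξ,u⟩} m(dξ)`
(all defining integrals being finite). -/
theorem stmt_11 {H : Type*} [NormedAddCommGroup H] [InnerProductSpace ℝ H] [CompleteSpace H]
    [MeasurableSpace H] [BorelSpace H] (K : Set H)
    (hK : IsSelfDualCone K) (hKgen : ∀ z : H, ∃ x ∈ K, ∃ y ∈ K, z = x - y)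
    (p : AdmissibleParams H K) :
    ∀ u ∈ K, ∀ v ∈ K, ∀ w ∈ K,
      -- all integrals are finite
      IntegrableOn (fun ξ : H => ⟪ξ, v⟫ * Real.exp (-⟪ξ, u⟫) - ⟪trunc ξ, v⟫) (K \ {0}) p.m ∧
      IntegrableOn (fun ξ : H => ⟪ξ, v⟫ * ⟪ξ, w⟫ * Real.exp (-⟪ξ, u⟫)) (K \ {0}) p.m ∧
      -- first one-sided derivative: `D₊F(u)(v) = DF(u)v`
      Filter.Tendsto (fun l : ℝ => (Ffun p (u + l • v) - Ffun p u) / l)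
        (𝓝[>] 0) (𝓝 (DFfun p u v)) ∧
      -- second one-sided derivative: `D₊²F(u)(v,w) = D²F(u)(v,w)`
      Filter.Tendsto (fun l : ℝ => (DFfun p (u + l • w) v - DFfun p u v) / l)
        (𝓝[>] 0)
        (𝓝 (-∫ ξ in K \ {0}, ⟪ξ, v⟫ * ⟪ξ, w⟫ * Real.exp (-⟪ξ, u⟫) ∂p.m)) := by
  have hdual : ∀ x ∈ K, ∀ y ∈ K, 0 ≤ ⟪x, y⟫ := by
    intro x hx; rw [hK] at hx; exact hx
  have hadd : ∀ x ∈ K, ∀ y ∈ K, x + y ∈ K := by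
    intro x hx y hy
    rw [hK]; intro z hz
    rw [inner_add_left]
    exact add_nonneg (hdual x hx z hz) (hdual y hy z hz)
  have hsmul : ∀ c : ℝ, 0 ≤ c → ∀ x ∈ K, c • x ∈ K := by
    intro c hc x hx
    rw [hK]; intro z hz
    rw [real_inner_smul_left]
    exact mul_nonneg hc (hdual x hx z hz)
  have hKclosed : IsClosed K := by
    rw [hK]
    have : {x : H | ∀ y ∈ K, 0 ≤ ⟪x, y⟫} = ⋂ y ∈ K, {x : H | 0 ≤ ⟪x, y⟫} := by
      ext x; simp
    rw [this]
    exact isClosed_biInter fun y _ =>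
      isClosed_le continuous_const (continuous_id.inner continuous_const)
  have hmeasK : MeasurableSet (K \ {0} : Set H) :=
    hKclosed.measurableSet.diff (measurableSet_singleton 0)
  have h_ae : ∀ᵐ ξ ∂(p.m.restrict (K \ {0})), ξ ∈ K \ {0} := ae_restrict_mem hmeasK
  intro u hu v hv w hw
  -- integrability of the first-derivative integrand, for any base point in K
  have hint1 : ∀ x ∈ K, IntegrableOn
      (fun ξ : H => ⟪ξ, v⟫ * Real.exp (-⟪ξ, x⟫) - ⟪trunc ξ, v⟫) (K \ {0}) p.m := by
    intro x hx
    apply Integrable.mono' (((p.m_chi v).const_mul 2).add ((p.m_sq).mul_const ‖v‖))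
    · exact (((meas_inner_right v).mul
        (Real.measurable_exp.comp (meas_inner_right x).neg)).sub
        (meas_inner_trunc v)).aestronglyMeasurable
    · filter_upwards [h_ae] with ξ hξ
      have hc : 0 ≤ ⟪ξ, v⟫ := hdual ξ hξ.1 v hv
      have ha : 0 ≤ ⟪ξ, x⟫ := hdual ξ hξ.1 x hx
      have he1 : Real.exp (-⟪ξ, x⟫) ≤ 1 := exp_neg_le_one ha
      have he0 : 0 < Real.exp (-⟪ξ, x⟫) := Real.exp_pos _
      rw [Real.norm_eq_abs]
      have h1 : |⟪ξ, v⟫ * Real.exp (-⟪ξ, x⟫) - ⟪trunc ξ, v⟫|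
          ≤ ⟪ξ, v⟫ + |⟪trunc ξ, v⟫| := by
        have h2 : |⟪ξ, v⟫ * Real.exp (-⟪ξ, x⟫)| ≤ ⟪ξ, v⟫ := by
          rw [abs_of_nonneg (mul_nonneg hc he0.le)]; nlinarith
        calc |⟪ξ, v⟫ * Real.exp (-⟪ξ, x⟫) - ⟪trunc ξ, v⟫|
            ≤ |⟪ξ, v⟫ * Real.exp (-⟪ξ, x⟫)| + |⟪trunc ξ, v⟫| := abs_sub _ _
          _ ≤ ⟪ξ, v⟫ + |⟪trunc ξ, v⟫| := by linarith
      exact h1.trans (bound_key hc)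
  -- integrability of the second-derivative integrand
  have hint2 : IntegrableOn
      (fun ξ : H => ⟪ξ, v⟫ * ⟪ξ, w⟫ * Real.exp (-⟪ξ, u⟫)) (K \ {0}) p.m := by
    apply Integrable.mono' ((p.m_sq).mul_const (‖v‖ * ‖w‖))
    · exact (((meas_inner_right v).mul (meas_inner_right w)).mul
        (Real.measurable_exp.comp (meas_inner_right u).neg)).aestronglyMeasurable
    · filter_upwards [h_ae] with ξ hξ
      have ha : 0 ≤ ⟪ξ, u⟫ := hdual ξ hξ.1 u hu
      have he1 : Real.exp (-⟪ξ, u⟫) ≤ 1 := exp_neg_le_one ha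
      have he0 : 0 < Real.exp (-⟪ξ, u⟫) := Real.exp_pos _
      have h1 : |⟪ξ, v⟫| ≤ ‖ξ‖ * ‖v‖ := abs_real_inner_le_norm ξ v
      have h2 : |⟪ξ, w⟫| ≤ ‖ξ‖ * ‖w‖ := abs_real_inner_le_norm ξ w
      rw [Real.norm_eq_abs, abs_mul, abs_mul, Real.abs_exp]
      have h3 : |⟪ξ, v⟫| * |⟪ξ, w⟫| ≤ (‖ξ‖ * ‖v‖) * (‖ξ‖ * ‖w‖) :=
        mul_le_mul h1 h2 (abs_nonneg _) (by positivity)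
      nlinarith [abs_nonneg ⟪ξ, v⟫, abs_nonneg ⟪ξ, w⟫,
        mul_nonneg (abs_nonneg ⟪ξ, v⟫) (abs_nonneg ⟪ξ, w⟫)]
  -- integrability of the integrand of F, for any base point in K
  have hGint : ∀ x ∈ K, IntegrableOn
      (fun ξ : H => Real.exp (-⟪ξ, x⟫) - 1 + ⟪trunc ξ, x⟫) (K \ {0}) p.m := by
    intro x hx
    apply Integrable.mono' (((p.m_chi x).const_mul 2).add p.m_sq)
    · exact (((Real.measurable_exp.comp (meas_inner_right x).neg).sub measurable_const).add
        (meas_inner_trunc x)).aestronglyMeasurable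
    · filter_upwards [h_ae] with ξ hξ
      rw [Real.norm_eq_abs]
      exact bound_key2 (hdual ξ hξ.1 x hx)
  refine ⟨hint1 u hu, hint2, ?_, ?_⟩
  -- first one-sided derivative
  · have htend1 : Tendsto
        (fun l : ℝ => ∫ ξ in K \ {0},
          ((Real.exp (-(⟪ξ, u⟫ + l * ⟪ξ, v⟫)) - Real.exp (-⟪ξ, u⟫)) / l + ⟪trunc ξ, v⟫) ∂p.m)
        (𝓝[>] 0)
        (𝓝 (∫ ξ in K \ {0}, (-(⟪ξ, v⟫ * Real.exp (-⟪ξ, u⟫)) + ⟪trunc ξ, v⟫) ∂p.m)) := by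
      apply tendsto_integral_filter_of_dominated_convergence
        (fun ξ => 2 * |⟪trunc ξ, v⟫| + ‖ξ‖ ^ 2 * ‖v‖)
      · filter_upwards with l
        exact ((((Real.measurable_exp.comp
            ((meas_inner_right u).add ((meas_inner_right v).const_mul l)).neg).sub
            (Real.measurable_exp.comp (meas_inner_right u).neg)).div_const l).add
            (meas_inner_trunc v)).aestronglyMeasurable
      · filter_upwards [self_mem_nhdsWithin] with l hl
        filter_upwards [h_ae] with ξ hξ
        have hc : 0 ≤ ⟪ξ, v⟫ := hdual ξ hξ.1 v hv
        have ha : 0 ≤ ⟪ξ, u⟫ := hdual ξ hξ.1 u hu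
        have h1 := exp_slope_abs_le ha hc hl
        rw [Real.norm_eq_abs]
        calc |(Real.exp (-(⟪ξ, u⟫ + l * ⟪ξ, v⟫)) - Real.exp (-⟪ξ, u⟫)) / l + ⟪trunc ξ, v⟫|
            ≤ |(Real.exp (-(⟪ξ, u⟫ + l * ⟪ξ, v⟫)) - Real.exp (-⟪ξ, u⟫)) / l|
              + |⟪trunc ξ, v⟫| := abs_add_le _ _
          _ ≤ ⟪ξ, v⟫ + |⟪trunc ξ, v⟫| := by linarith
          _ ≤ 2 * |⟪trunc ξ, v⟫| + ‖ξ‖ ^ 2 * ‖v‖ := bound_key hc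
      · exact ((p.m_chi v).const_mul 2).add ((p.m_sq).mul_const ‖v‖)
      · filter_upwards with ξ
        exact (exp_slope_tendsto ⟪ξ, u⟫ ⟪ξ, v⟫).add_const ⟪trunc ξ, v⟫
    have heq1 : (fun l : ℝ => ⟪p.b, v⟫ - ∫ ξ in K \ {0},
          ((Real.exp (-(⟪ξ, u⟫ + l * ⟪ξ, v⟫)) - Real.exp (-⟪ξ, u⟫)) / l + ⟪trunc ξ, v⟫) ∂p.m)
        =ᶠ[𝓝[>] (0:ℝ)] fun l : ℝ => (Ffun p (u + l • v) - Ffun p u) / l := by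
      filter_upwards [self_mem_nhdsWithin] with l hl
      have hl0 : (0:ℝ) < l := hl
      have hxK : u + l • v ∈ K := hadd u hu _ (hsmul l hl0.le v hv)
      have hdiff : (∫ ξ in K \ {0},
            (Real.exp (-⟪ξ, u + l • v⟫) - 1 + ⟪trunc ξ, u + l • v⟫) ∂p.m)
          - (∫ ξ in K \ {0}, (Real.exp (-⟪ξ, u⟫) - 1 + ⟪trunc ξ, u⟫) ∂p.m)
          = l * ∫ ξ in K \ {0},
            ((Real.exp (-(⟪ξ, u⟫ + l * ⟪ξ, v⟫)) - Real.exp (-⟪ξ, u⟫)) / l + ⟪trunc ξ, v⟫) ∂p.m := by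
        rw [← integral_sub (hGint _ hxK) (hGint u hu), ← integral_const_mul]
        apply integral_congr_ae
        filter_upwards with ξ
        rw [inner_add_right, real_inner_smul_right, inner_add_right, real_inner_smul_right]
        field_simp
        ring
      unfold Ffun
      rw [inner_add_right, real_inner_smul_right, eq_div_iff (ne_of_gt hl0)]
      linear_combination hdiff
    have hval : ⟪p.b, v⟫ - ∫ ξ in K \ {0},
        (-(⟪ξ, v⟫ * Real.exp (-⟪ξ, u⟫)) + ⟪trunc ξ, v⟫) ∂p.m = DFfun p u v := by
      unfold DFfun
      have h : (fun ξ : H => -(⟪ξ, v⟫ * Real.exp (-⟪ξ, u⟫)) + ⟪trunc ξ, v⟫)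
          = fun ξ : H => -(⟪ξ, v⟫ * Real.exp (-⟪ξ, u⟫) - ⟪trunc ξ, v⟫) := by
        funext ξ; ring
      rw [h, integral_neg]
      ring
    have hfinal := (tendsto_const_nhds.sub htend1).congr' heq1
    rwa [hval] at hfinal
  -- second one-sided derivative
  · have htend2 : Tendsto
        (fun l : ℝ => ∫ ξ in K \ {0},
          (⟪ξ, v⟫ * ((Real.exp (-(⟪ξ, u⟫ + l * ⟪ξ, w⟫)) - Real.exp (-⟪ξ, u⟫)) / l)) ∂p.m)
        (𝓝[>] 0)
        (𝓝 (∫ ξ in K \ {0}, (⟪ξ, v⟫ * -(⟪ξ, w⟫ * Real.exp (-⟪ξ, u⟫))) ∂p.m)) := by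
      apply tendsto_integral_filter_of_dominated_convergence
        (fun ξ => ‖ξ‖ ^ 2 * (‖v‖ * ‖w‖))
      · filter_upwards with l
        exact ((meas_inner_right v).mul (((Real.measurable_exp.comp
            ((meas_inner_right u).add ((meas_inner_right w).const_mul l)).neg).sub
            (Real.measurable_exp.comp (meas_inner_right u).neg)).div_const l)).aestronglyMeasurable
      · filter_upwards [self_mem_nhdsWithin] with l hl
        filter_upwards [h_ae] with ξ hξ
        have hc : 0 ≤ ⟪ξ, w⟫ := hdual ξ hξ.1 w hw
        have ha : 0 ≤ ⟪ξ, u⟫ := hdual ξ hξ.1 u hu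
        have h1 := exp_slope_abs_le ha hc hl
        have h2 : |⟪ξ, v⟫| ≤ ‖ξ‖ * ‖v‖ := abs_real_inner_le_norm ξ v
        have h3 : ⟪ξ, w⟫ ≤ ‖ξ‖ * ‖w‖ := real_inner_le_norm ξ w
        rw [Real.norm_eq_abs, abs_mul]
        have h4 : |⟪ξ, v⟫| * |(Real.exp (-(⟪ξ, u⟫ + l * ⟪ξ, w⟫)) - Real.exp (-⟪ξ, u⟫)) / l|
            ≤ (‖ξ‖ * ‖v‖) * (‖ξ‖ * ‖w‖) :=
          mul_le_mul h2 (h1.trans h3) (abs_nonneg _) (by positivity)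
        nlinarith [h4]
      · exact (p.m_sq).mul_const _
      · filter_upwards with ξ
        exact (exp_slope_tendsto ⟪ξ, u⟫ ⟪ξ, w⟫).const_mul ⟪ξ, v⟫
    have heq2 : (fun l : ℝ => ∫ ξ in K \ {0},
          (⟪ξ, v⟫ * ((Real.exp (-(⟪ξ, u⟫ + l * ⟪ξ, w⟫)) - Real.exp (-⟪ξ, u⟫)) / l)) ∂p.m)
        =ᶠ[𝓝[>] (0:ℝ)] fun l : ℝ => (DFfun p (u + l • w) v - DFfun p u v) / l := by
      filter_upwards [self_mem_nhdsWithin] with l hl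
      have hl0 : (0:ℝ) < l := hl
      have hxK : u + l • w ∈ K := hadd u hu _ (hsmul l hl0.le w hw)
      have hdiff : (∫ ξ in K \ {0},
            (⟪ξ, v⟫ * Real.exp (-⟪ξ, u + l • w⟫) - ⟪trunc ξ, v⟫) ∂p.m)
          - (∫ ξ in K \ {0}, (⟪ξ, v⟫ * Real.exp (-⟪ξ, u⟫) - ⟪trunc ξ, v⟫) ∂p.m)
          = l * ∫ ξ in K \ {0},
            (⟪ξ, v⟫ * ((Real.exp (-(⟪ξ, u⟫ + l * ⟪ξ, w⟫)) - Real.exp (-⟪ξ, u⟫)) / l)) ∂p.m := by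
        rw [← integral_sub (hint1 _ hxK) (hint1 u hu), ← integral_const_mul]
        apply integral_congr_ae
        filter_upwards with ξ
        rw [inner_add_right, real_inner_smul_right]
        field_simp
        ring
      unfold DFfun
      rw [eq_div_iff (ne_of_gt hl0)]
      linear_combination -hdiff
    have hval2 : (∫ ξ in K \ {0}, (⟪ξ, v⟫ * -(⟪ξ, w⟫ * Real.exp (-⟪ξ, u⟫))) ∂p.m)
        = -∫ ξ in K \ {0}, ⟪ξ, v⟫ * ⟪ξ, w⟫ * Real.exp (-⟪ξ, u⟫) ∂p.m := by
      rw [← integral_neg]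
      apply integral_congr_ae
      filter_upwards with ξ
      ring
    have hfinal := htend2.congr' heq2
    rwa [hval2] at hfinal
end
end
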